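/- Let φ : E(𝒜) → E(ℬ) be a sequential isomorphism between effect sets of von Neumann algebras. Then φ preserves commutativity in both directions: for A, B ∈ E(𝒜), AB = BA if and only if φ(A)φ(B) = φ(B)φ(A). Consequently φ maps the central effects E(Z(𝒜)) bijectively onto E(Z(ℬ)). -/

import Mathlib

set_option synthInstance.maxHeartbeats 1000000
set_option maxHeartbeats 1000000

open NormedSpace

section CommuteCFC
variable {A : Type*} [CStarAlgebra A]

lemma commute_of_mem_elemental {a b x : A} (h1 : Commute b a) (h2 : Commute b (star a))
    (hx : x ∈ StarAlgebra.elemental ℂ a) : Commute b x := by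
  have hclosed : IsClosed {y : A | Commute b y} := by
    have : {y : A | Commute b y} = (fun y => b * y - y * b) ⁻¹' {0} := by
      ext y; simp [Commute, SemiconjBy, sub_eq_zero]
    rw [this]
    exact IsClosed.preimage (by fun_prop) isClosed_singleton
  have hadj : (StarAlgebra.adjoin ℂ ({a} : Set A) : Set A) ⊆ {y : A | Commute b y} := by
    intro y hy
    rw [SetLike.mem_coe, ← StarSubalgebra.mem_toSubalgebra,
      StarAlgebra.adjoin_toSubalgebra] at hy
    induction hy using Algebra.adjoin_induction with
    | mem x hx =>
      simp only [Set.union_singleton, Set.star_singleton, Set.mem_insert_iff,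
        Set.mem_singleton_iff] at hx
      rcases hx with hx | hx <;> subst hx
      · exact h2
      · exact h1
    | algebraMap r => exact (Algebra.commutes r b).symm
    | add x y hx hy px py => exact px.add_right py
    | mul x y hx hy px py => exact px.mul_right py
  have : x ∈ closure ((StarAlgebra.adjoin ℂ ({a} : Set A)) : Set A) := by
    rw [← StarSubalgebra.topologicalClosure_coe]; exact hx
  exact closure_minimal hadj hclosed this

lemma commute_cfc_complex {a b : A} [ha : IsStarNormal a] (h1 : Commute b a)
    (h2 : Commute b (star a)) (g : ℂ → ℂ) : Commute b (cfc g a) := by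
  by_cases hg : ContinuousOn g (spectrum ℂ a)
  · rw [cfc_apply g a]
    refine commute_of_mem_elemental h1 h2 ?_
    rw [cfcHom_eq_of_isStarNormal]
    exact Subtype.mem _
  · rw [cfc_apply_of_not_continuousOn a hg]; exact Commute.zero_right b
end CommuteCFC

section FP
variable {A : Type*} [CStarAlgebra A]

noncomputable local instance instNormedAlgebraRatFP : NormedAlgebra ℚ A :=
  NormedAlgebra.restrictScalars ℚ ℂ A

local instance instContinuousSMulRatComplexFP : ContinuousSMul ℚ ℂ := by
  constructor
  have : (fun p : ℚ × ℂ => p.1 • p.2) = fun p => (((p.1 : ℝ) : ℂ) * p.2) := by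
    funext p; rw [Rat.smul_def, Complex.ofReal_ratCast]
  rw [this]
  exact ((Complex.continuous_ofReal.comp Rat.continuous_coe_real).comp continuous_fst).mul continuous_snd

lemma exp_comm_of_comm {m n t : A} (h : m * t = t * n) (z : ℂ) :
    exp (z • m) * t = t * exp (z • n) := by
  have hpow : ∀ k : ℕ, (z • m) ^ k * t = t * (z • n) ^ k := by
    intro k
    induction k with
    | zero => simp
    | succ k ih =>
      rw [pow_succ, pow_succ, ← mul_assoc t, ← ih, mul_assoc, mul_assoc]
      congr 1
      rw [smul_mul_assoc, h, mul_smul_comm]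
  have e1 : exp (z • m) = ∑' k : ℕ, (Nat.factorial k : ℂ)⁻¹ • (z • m) ^ k := congrFun (exp_eq_tsum ℂ) _
  have e2 : exp (z • n) = ∑' k : ℕ, (Nat.factorial k : ℂ)⁻¹ • (z • n) ^ k := congrFun (exp_eq_tsum ℂ) _
  have hs1 : Summable fun k : ℕ => (Nat.factorial k : ℂ)⁻¹ • (z • m) ^ k := expSeries_summable' (z • m)
  have hs2 : Summable fun k : ℕ => (Nat.factorial k : ℂ)⁻¹ • (z • n) ^ k := expSeries_summable' (z • n)
  rw [e1, e2, ← hs1.tsum_mul_right t, ← hs2.tsum_mul_left t]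
  exact tsum_congr fun k => by rw [smul_mul_assoc, mul_smul_comm, hpow k]

lemma exp_mul_exp_neg_self (u : A) : exp u * exp (-u) = 1 := by
  rw [← exp_add_of_commute (Commute.refl u).neg_right, add_neg_cancel, exp_zero]

lemma exp_neg_mul_exp_self (u : A) : exp (-u) * exp u = 1 := by
  rw [← exp_add_of_commute (Commute.refl u).neg_left, neg_add_cancel, exp_zero]

lemma exp_skew_mem_unitary (u : A) (hu : star u = -u) : exp u ∈ unitary A := by
  constructor
  · rw [star_exp, hu]; exact exp_neg_mul_exp_self u
  · rw [star_exp, hu]; exact exp_mul_exp_neg_self u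

theorem fuglede_putnam {m n t : A} (hm : IsStarNormal m) (hn : IsStarNormal n)
    (h : m * t = t * n) : star m * t = t * star n := by
  rcases subsingleton_or_nontrivial A with hA | hA
  · exact Subsingleton.elim _ _
  set g : ℂ → A := fun w => exp (w • star m) * t * exp (w • (-star n)) with hgdef
  have hgdiff : Differentiable ℂ g := fun w =>
    (((hasDerivAt_exp_smul_const' (𝕂 := ℂ) (star m) w).differentiableAt.mul
      (differentiableAt_const t)).mul
      (hasDerivAt_exp_smul_const' (𝕂 := ℂ) (-star n) w).differentiableAt)
  have hbdd : ∀ w, ‖g w‖ ≤ ‖t‖ := by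
    intro w
    set c : ℂ := starRingEnd ℂ w with hc
    have t_eq : exp (-(c • m)) * t * exp (c • n) = t := by
      have key := exp_comm_of_comm h (-c)
      rw [neg_smul, neg_smul] at key
      rw [key, mul_assoc, exp_neg_mul_exp_self, mul_one]
    have hcomm1 : Commute (w • star m) (-(c • m)) :=
      ((hm.star_comm_self.smul_left w).smul_right c).neg_right
    have hcomm2 : Commute (c • n) (w • (-star n)) := by
      rw [smul_neg]
      exact ((hn.star_comm_self.symm.smul_left c).smul_right w).neg_right
    have hgw : exp (w • star m + -(c • m)) * t * exp (c • n + w • (-star n)) = g w := by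
      calc exp (w • star m + -(c • m)) * t * exp (c • n + w • (-star n))
          = exp (w • star m) * exp (-(c • m)) * t *
              (exp (c • n) * exp (w • (-star n))) := by
            rw [exp_add_of_commute hcomm1, exp_add_of_commute hcomm2]
        _ = exp (w • star m) * (exp (-(c • m)) * t * exp (c • n)) *
              exp (w • (-star n)) := by
            simp only [mul_assoc]
        _ = exp (w • star m) * t * exp (w • (-star n)) := by rw [t_eq]
    have hu : star (w • star m + -(c • m)) = -(w • star m + -(c • m)) := by
      simp [star_smul, hc, neg_add, Complex.star_def]
    have hv : star (c • n + w • (-star n)) = -(c • n + w • (-star n)) := by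
      simp only [star_add, star_smul, star_neg, star_star, Complex.star_def, ← hc,
        Complex.conj_conj]
      rw [hc]
      simp [neg_add, add_comm]
    rw [← hgw]
    apply le_of_eq
    rw [mul_assoc]
    calc ‖exp (w • star m + -(c • m)) * (t * exp (c • n + w • (-star n)))‖
        = ‖t * exp (c • n + w • (-star n))‖ :=
          CStarRing.norm_coe_unitary_mul (⟨_, exp_skew_mem_unitary _ hu⟩ : unitary A) _
      _ = ‖t‖ := CStarRing.norm_mul_coe_unitary t (⟨_, exp_skew_mem_unitary _ hv⟩ : unitary A)
  have hbdd' : Bornology.IsBounded (Set.range g) :=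
    (Metric.isBounded_iff_subset_closedBall 0).2
      ⟨‖t‖, by rintro x ⟨w, rfl⟩; simpa [mem_closedBall_zero_iff] using hbdd w⟩
  have hconst : ∀ w, g w = g 0 := fun w => hgdiff.apply_eq_apply_of_bounded hbdd' w 0
  have hg0 : g 0 = t := by simp [hgdef]
  have hFG : (fun w : ℂ => exp (w • star m) * t) = fun w => t * exp (w • star n) := by
    funext w
    have hgt : g w = t := (hconst w).trans hg0
    calc exp (w • star m) * t
        = exp (w • star m) * t * (exp (w • (-star n)) * exp (w • star n)) := by
          rw [smul_neg, exp_neg_mul_exp_self, mul_one]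
      _ = g w * exp (w • star n) := by rw [hgdef]; simp only [mul_assoc]
      _ = t * exp (w • star n) := by rw [hgt]
  have d1 : HasDerivAt (fun w : ℂ => exp (w • star m) * t) (star m * t) 0 := by
    have := (hasDerivAt_exp_smul_const' (𝕂 := ℂ) (star m) 0).mul_const t
    simpa using this
  have d2 : HasDerivAt (fun w : ℂ => t * exp (w • star n)) (t * star n) 0 := by
    have := (hasDerivAt_exp_smul_const' (𝕂 := ℂ) (star n) 0).const_mul t
    simpa using this
  rw [hFG] at d1
  exact d1.unique d2
end FP

section GN
variable {A : Type*} [CStarAlgebra A] [PartialOrder A] [StarOrderedRing A]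

lemma commute_sqrt {a b : A} (ha : 0 ≤ a) (h : Commute b a) : Commute b (CFC.sqrt a) := by
  have hsa : IsSelfAdjoint a := .of_nonneg ha
  haveI := hsa.isStarNormal
  have h2 : Commute b (star a) := hsa.symm ▸ h
  rw [CFC.sqrt_eq_cfc, cfc_nnreal_eq_real _ _ ha, cfc_real_eq_complex]
  exact commute_cfc_complex h h2 _

lemma seq_eq_mul_of_commute {a b : A} (ha : 0 ≤ a) (h : a * b = b * a) :
    CFC.sqrt a * b * CFC.sqrt a = a * b := by
  have h1 : Commute b (CFC.sqrt a) := commute_sqrt ha h.symm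
  rw [← h1.eq, mul_assoc, CFC.sqrt_mul_sqrt_self a ha, ← h]

lemma commute_of_seq_eq {a b : A} (ha : 0 ≤ a) (hb : 0 ≤ b)
    (h : CFC.sqrt a * b * CFC.sqrt a = CFC.sqrt b * a * CFC.sqrt b) : a * b = b * a := by
  set sa := CFC.sqrt a with hsadef
  set sb := CFC.sqrt b with hsbdef
  have hsa : IsSelfAdjoint sa := .of_nonneg (CFC.sqrt_nonneg _)
  have hsb : IsSelfAdjoint sb := .of_nonneg (CFC.sqrt_nonneg _)
  have hstar : star (sa * sb) = sb * sa := by rw [star_mul, hsa.star_eq, hsb.star_eq]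
  have hnormal : IsStarNormal (sa * sb) := by
    constructor
    rw [Commute, SemiconjBy, hstar]
    calc sb * sa * (sa * sb) = sb * (sa * sa) * sb := by simp only [mul_assoc]
      _ = sb * a * sb := by rw [CFC.sqrt_mul_sqrt_self a ha]
      _ = sa * b * sa := h.symm
      _ = sa * (sb * sb) * sa := by rw [CFC.sqrt_mul_sqrt_self b hb]
      _ = sa * sb * (sb * sa) := by simp only [mul_assoc]
  have hnormal' : IsStarNormal (star (sa * sb)) :=
    ⟨by rw [star_star]; exact hnormal.star_comm_self.symm⟩
  have key : (sa * sb) * sa = sa * star (sa * sb) := by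
    rw [hstar]; simp only [mul_assoc]
  have fp := fuglede_putnam hnormal hnormal' key
  rw [star_star, hstar] at fp
  have hcomm : sb * a = a * sb := by
    calc sb * a = sb * (sa * sa) := by rw [CFC.sqrt_mul_sqrt_self a ha]
      _ = sb * sa * sa := by rw [mul_assoc]
      _ = sa * (sa * sb) := fp
      _ = sa * sa * sb := by rw [mul_assoc]
      _ = a * sb := by rw [CFC.sqrt_mul_sqrt_self a ha]
  calc a * b = a * (sb * sb) := by rw [CFC.sqrt_mul_sqrt_self b hb]
    _ = (a * sb) * sb := by rw [mul_assoc]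
    _ = (sb * a) * sb := by rw [hcomm]
    _ = sb * (a * sb) := by rw [mul_assoc]
    _ = sb * (sb * a) := by rw [hcomm]
    _ = (sb * sb) * a := by rw [mul_assoc]
    _ = b * a := by rw [CFC.sqrt_mul_sqrt_self b hb]
end GN

/-- The effects of a von Neumann algebra `M`: elements `a` of `M` with `0 ≤ a ≤ 1`
in the Loewner order. -/
def IsVNEffect {H : Type*} [NormedAddCommGroup H] [InnerProductSpace ℂ H] [CompleteSpace H]
    (M : VonNeumannAlgebra H) (a : H →L[ℂ] H) : Prop :=
  a ∈ M ∧ 0 ≤ a ∧ a ≤ 1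

section VN
variable {H : Type*} [NormedAddCommGroup H] [InnerProductSpace ℂ H] [CompleteSpace H]

lemma sqrt_mem_vn (M : VonNeumannAlgebra H) {a : H →L[ℂ] H} (haM : a ∈ M) (ha : 0 ≤ a) :
    CFC.sqrt a ∈ M := by
  have hmem : CFC.sqrt a ∈ Set.centralizer (Set.centralizer (M : Set (H →L[ℂ] H))) := by
    intro z hz
    have hza : Commute z a := (hz a haM).symm
    exact (commute_sqrt ha hza).eq
  rw [← SetLike.mem_coe, ← M.centralizer_centralizer]
  exact hmem

lemma isVNEffect_seq (M : VonNeumannAlgebra H) {a b : H →L[ℂ] H}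
    (ha : IsVNEffect M a) (hb : IsVNEffect M b) :
    IsVNEffect M (CFC.sqrt a * b * CFC.sqrt a) := by
  obtain ⟨haM, ha0, ha1⟩ := ha
  obtain ⟨hbM, hb0, hb1⟩ := hb
  have hs := sqrt_mem_vn M haM ha0
  have hsa : IsSelfAdjoint (CFC.sqrt a) := .of_nonneg (CFC.sqrt_nonneg _)
  refine ⟨mul_mem (mul_mem hs hbM) hs, ?_, ?_⟩
  · have := star_left_conjugate_nonneg hb0 (CFC.sqrt a)
    rwa [hsa.star_eq] at this
  · have := star_left_conjugate_le_conjugate hb1 (CFC.sqrt a)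
    rw [hsa.star_eq, mul_one, CFC.sqrt_mul_sqrt_self a ha0] at this
    exact this.trans ha1

lemma commute_all_of_commute_effects (M : VonNeumannAlgebra H) {a : H →L[ℂ] H}
    (h : ∀ b, IsVNEffect M b → b * a = a * b) : ∀ x ∈ M, x * a = a * x := by
  have halg : ∀ c : ℝ, algebraMap ℝ (H →L[ℂ] H) c ∈ M := by
    intro c
    rw [Algebra.algebraMap_eq_smul_one,
      show (c • (1 : H →L[ℂ] H)) = (c : ℂ) • 1 by simp [Complex.coe_smul]]
    exact M.toStarSubalgebra.smul_mem (one_mem M) _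
  have hsmul_mem : ∀ (c : ℝ) (y : H →L[ℂ] H), y ∈ M → c • y ∈ M := by
    intro c y hy
    rw [show (c • y) = (c : ℂ) • y by simp [Complex.coe_smul]]
    exact M.toStarSubalgebra.smul_mem hy _
  have halg_nonneg : ∀ c : ℝ, 0 ≤ c → (0 : H →L[ℂ] H) ≤ algebraMap ℝ (H →L[ℂ] H) c := by
    intro c hc
    rw [Algebra.algebraMap_eq_smul_one]
    have h01 : (0 : H →L[ℂ] H) ≤ 1 := zero_le_one
    exact smul_nonneg hc h01
  have hsa : ∀ x ∈ M, IsSelfAdjoint x → Commute x a := by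
    intro x hxM hx
    set r : ℝ := ‖x‖ + 1 with hr
    have h2r : (0 : ℝ) < 2 * r := by positivity
    set e : H →L[ℂ] H := (2 * r)⁻¹ • (x + algebraMap ℝ (H →L[ℂ] H) r) with he
    have heM : e ∈ M := hsmul_mem _ _ (add_mem hxM (halg r))
    have hxle : x ≤ algebraMap ℝ (H →L[ℂ] H) r := by
      refine (hx.le_algebraMap_norm_self).trans ?_
      rw [← sub_nonneg, ← map_sub]
      exact halg_nonneg _ (show (0:ℝ) ≤ r - ‖x‖ by rw [hr]; linarith)
    have hxge : -(algebraMap ℝ (H →L[ℂ] H) r) ≤ x := by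
      refine le_trans ?_ hx.neg_algebraMap_norm_le_self
      rw [neg_le_neg_iff, ← sub_nonneg, ← map_sub]
      exact halg_nonneg _ (show (0:ℝ) ≤ r - ‖x‖ by rw [hr]; linarith)
    have he0 : 0 ≤ e := by
      rw [he]
      have hsum : (0 : H →L[ℂ] H) ≤ x + algebraMap ℝ (H →L[ℂ] H) r := by
        simpa using add_le_add_left hxge (algebraMap ℝ (H →L[ℂ] H) r)
      exact smul_nonneg (by positivity) hsum
    have he1 : e ≤ 1 := by
      rw [he]
      have hle : x + algebraMap ℝ (H →L[ℂ] H) r ≤ algebraMap ℝ (H →L[ℂ] H) (2 * r) := by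
        have h' := add_le_add_left hxle (algebraMap ℝ (H →L[ℂ] H) r)
        rwa [← map_add, show r + r = 2 * r by ring] at h'
      calc (2 * r)⁻¹ • (x + algebraMap ℝ (H →L[ℂ] H) r)
          ≤ (2 * r)⁻¹ • algebraMap ℝ (H →L[ℂ] H) (2 * r) :=
            smul_le_smul_of_nonneg_left hle (by positivity)
        _ = 1 := by
            rw [Algebra.algebraMap_eq_smul_one, smul_smul,
              inv_mul_cancel₀ (ne_of_gt h2r), one_smul]
    have hcomm_e : Commute e a := h e ⟨heM, he0, he1⟩
    have hxe : x = (2 * r) • e - algebraMap ℝ (H →L[ℂ] H) r := by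
      rw [he, smul_smul, mul_inv_cancel₀ (ne_of_gt h2r), one_smul, add_sub_cancel_right]
    rw [hxe]
    exact (hcomm_e.smul_left (2 * r)).sub_left (Algebra.commutes r a)
  intro x hxM
  have hstarM : star x ∈ M := star_mem hxM
  set re : H →L[ℂ] H := (2⁻¹ : ℂ) • (x + star x) with hre
  set im : H →L[ℂ] H := (-(2⁻¹) * Complex.I) • (x - star x) with him
  have hreM : re ∈ M := M.toStarSubalgebra.smul_mem (add_mem hxM hstarM) _
  have himM : im ∈ M := M.toStarSubalgebra.smul_mem (sub_mem hxM hstarM) _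
  have hre_sa : IsSelfAdjoint re := by
    rw [hre, IsSelfAdjoint, star_smul, star_add, star_star]
    rw [show star (2⁻¹ : ℂ) = (2⁻¹ : ℂ) by simp [Complex.ext_iff]]
    rw [add_comm]
  have him_sa : IsSelfAdjoint im := by
    rw [him, IsSelfAdjoint, star_smul, star_sub, star_star]
    rw [show star (-(2⁻¹) * Complex.I) = (2⁻¹ : ℂ) * Complex.I by
      simp [Complex.ext_iff]]
    rw [show star x - x = -(x - star x) by abel, smul_neg, ← neg_smul]
    ring_nf
  have hx_eq : x = re + Complex.I • im := by
    rw [hre, him, smul_smul]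
    rw [show Complex.I * (-(2⁻¹) * Complex.I) = (2⁻¹ : ℂ) by
      rw [show Complex.I * (-(2⁻¹) * Complex.I) = -(2⁻¹ : ℂ) * (Complex.I * Complex.I) by ring,
        Complex.I_mul_I]; ring]
    module
  have c1 : Commute re a := hsa re hreM hre_sa
  have c2 : Commute im a := hsa im himM him_sa
  rw [hx_eq]
  exact c1.add_left (c2.smul_left Complex.I)
end VN

/-- A sequential isomorphism between von Neumann algebra effect sets preserves
commutativity in both directions; consequently it maps central effects to central
effects in both directions. -/
theorem sequentialIso_preserves_commutativity
    {H K : Type*} [NormedAddCommGroup H] [InnerProductSpace ℂ H] [CompleteSpace H]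
    [NormedAddCommGroup K] [InnerProductSpace ℂ K] [CompleteSpace K]
    (M : VonNeumannAlgebra H) (N : VonNeumannAlgebra K)
    (φ : {a : H →L[ℂ] H // IsVNEffect M a} → {b : K →L[ℂ] K // IsVNEffect N b})
    (hbij : Function.Bijective φ)
    (hseq : ∀ (a b : {a : H →L[ℂ] H // IsVNEffect M a})
        (h : IsVNEffect M (CFC.sqrt (a : H →L[ℂ] H) * (b : H →L[ℂ] H) * CFC.sqrt (a : H →L[ℂ] H))),
      (φ ⟨CFC.sqrt (a : H →L[ℂ] H) * (b : H →L[ℂ] H) * CFC.sqrt (a : H →L[ℂ] H), h⟩ : K →L[ℂ] K)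
        = CFC.sqrt (φ a : K →L[ℂ] K) * (φ b : K →L[ℂ] K) * CFC.sqrt (φ a : K →L[ℂ] K)) :
    (∀ a b : {a : H →L[ℂ] H // IsVNEffect M a},
      (a : H →L[ℂ] H) * (b : H →L[ℂ] H) = (b : H →L[ℂ] H) * (a : H →L[ℂ] H) ↔
        (φ a : K →L[ℂ] K) * (φ b : K →L[ℂ] K) = (φ b : K →L[ℂ] K) * (φ a : K →L[ℂ] K)) ∧
    (∀ a : {a : H →L[ℂ] H // IsVNEffect M a},
      (∀ x ∈ M, x * (a : H →L[ℂ] H) = (a : H →L[ℂ] H) * x) ↔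
        (∀ y ∈ N, y * (φ a : K →L[ℂ] K) = (φ a : K →L[ℂ] K) * y)) := by
  have part1 : ∀ a b : {a : H →L[ℂ] H // IsVNEffect M a},
      (a : H →L[ℂ] H) * (b : H →L[ℂ] H) = (b : H →L[ℂ] H) * (a : H →L[ℂ] H) ↔
        (φ a : K →L[ℂ] K) * (φ b : K →L[ℂ] K) = (φ b : K →L[ℂ] K) * (φ a : K →L[ℂ] K) := by
    intro a b
    have heff : IsVNEffect M (CFC.sqrt (a : H →L[ℂ] H) * (b : H →L[ℂ] H)
        * CFC.sqrt (a : H →L[ℂ] H)) := isVNEffect_seq M a.2 b.2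
    have heff' : IsVNEffect M (CFC.sqrt (b : H →L[ℂ] H) * (a : H →L[ℂ] H)
        * CFC.sqrt (b : H →L[ℂ] H)) := isVNEffect_seq M b.2 a.2
    have e1 := hseq a b heff
    have e2 := hseq b a heff'
    constructor
    · intro hab
      have hval : CFC.sqrt (a : H →L[ℂ] H) * (b : H →L[ℂ] H) * CFC.sqrt (a : H →L[ℂ] H)
          = CFC.sqrt (b : H →L[ℂ] H) * (a : H →L[ℂ] H) * CFC.sqrt (b : H →L[ℂ] H) := by
        rw [seq_eq_mul_of_commute a.2.2.1 hab, seq_eq_mul_of_commute b.2.2.1 hab.symm]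
        exact hab
      have hsub : (⟨_, heff⟩ : {a : H →L[ℂ] H // IsVNEffect M a}) = ⟨_, heff'⟩ :=
        Subtype.ext hval
      have e3 : CFC.sqrt (φ a : K →L[ℂ] K) * (φ b : K →L[ℂ] K) * CFC.sqrt (φ a : K →L[ℂ] K)
          = CFC.sqrt (φ b : K →L[ℂ] K) * (φ a : K →L[ℂ] K) * CFC.sqrt (φ b : K →L[ℂ] K) := by
        rw [← e1, ← e2, hsub]
      exact commute_of_seq_eq (φ a).2.2.1 (φ b).2.2.1 e3
    · intro hfab
      have hval : CFC.sqrt (φ a : K →L[ℂ] K) * (φ b : K →L[ℂ] K) * CFC.sqrt (φ a : K →L[ℂ] K)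
          = CFC.sqrt (φ b : K →L[ℂ] K) * (φ a : K →L[ℂ] K) * CFC.sqrt (φ b : K →L[ℂ] K) := by
        rw [seq_eq_mul_of_commute (φ a).2.2.1 hfab, seq_eq_mul_of_commute (φ b).2.2.1 hfab.symm]
        exact hfab
      have hφeq : φ ⟨_, heff⟩ = φ ⟨_, heff'⟩ := Subtype.ext (by rw [e1, e2]; exact hval)
      have hsub := hbij.1 hφeq
      have hval2 : CFC.sqrt (a : H →L[ℂ] H) * (b : H →L[ℂ] H) * CFC.sqrt (a : H →L[ℂ] H)
          = CFC.sqrt (b : H →L[ℂ] H) * (a : H →L[ℂ] H) * CFC.sqrt (b : H →L[ℂ] H) :=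
        congrArg Subtype.val hsub
      exact commute_of_seq_eq a.2.2.1 b.2.2.1 hval2
  refine ⟨part1, fun a => ⟨fun hc y hyN => ?_, fun hc x hxM => ?_⟩⟩
  · refine commute_all_of_commute_effects N (fun c hc' => ?_) y hyN
    obtain ⟨b, hb⟩ := hbij.2 ⟨c, hc'⟩
    have hcb : c = ((φ b : {b : K →L[ℂ] K // IsVNEffect N b}) : K →L[ℂ] K) := by rw [hb]
    rw [hcb]
    exact ((part1 a b).1 (hc (b : H →L[ℂ] H) b.2.1).symm).symm
  · refine commute_all_of_commute_effects M (fun b hb' => ?_) x hxM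
    exact ((part1 a ⟨b, hb'⟩).2 (hc ((φ ⟨b, hb'⟩ : _) : K →L[ℂ] K) (φ ⟨b, hb'⟩).2.1).symm).symm
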